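/- The Schur–Weierstrass polynomial S is weighted homogeneous of total weight g(g+1)/2 when the variable T_j is assigned the weight 2(g-j)+1 for j = 1, ..., g; that is, every monomial T_1^{m_1} * ... * T_g^{m_g} occurring in S with nonzero coefficient satisfies sum_{j=1}^{g} m_j * (2(g-j)+1) = g(g+1)/2. -/

import Mathlib

open MvPolynomial

/-- `U k = (-1)^k h_k`, the signed complete homogeneous symmetric polynomial in
`ℚ[x_1, …, x_g]`, with `U k = 0` for `k < 0`. -/
noncomputable def SWU (g : ℕ) (k : ℤ) : MvPolynomial (Fin g) ℚ :=
  if 0 ≤ k then C ((-1 : ℚ) ^ k) * hsymm (Fin g) ℚ k.toNat else 0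

/-- `D_g = det (U_{g - 2i + j + 1})_{1 ≤ i,j ≤ g}` (zero-based indices: the `(i,j)`
entry is `U_{g + j - 2i}`). -/
noncomputable def SWD (g : ℕ) : MvPolynomial (Fin g) ℚ :=
  (Matrix.of fun i j : Fin g => SWU g ((g : ℤ) + (j : ℤ) - 2 * (i : ℤ))).det

/-- The weight `2(g-j)+1` attached to the (zero-based) index `j`. -/
def SWwt (g : ℕ) (j : Fin g) : ℕ := 2 * (g - 1 - (j : ℕ)) + 1

/-- `u_j = (1/(2(g-j)+1)) p_{2(g-j)+1}`. -/
noncomputable def SWu (g : ℕ) (j : Fin g) : MvPolynomial (Fin g) ℚ :=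
  C (1 / ((SWwt g j : ℕ) : ℚ)) * psum (Fin g) ℚ (SWwt g j)

section AuxLemmas

variable {σ ι : Type*}

/-- Coefficient formula for partial derivatives. -/
lemma SW.coeff_pderiv (i : σ) (p : MvPolynomial σ ℚ) (u : σ →₀ ℕ) :
    coeff u (pderiv i p) = ((u i : ℚ) + 1) * coeff (u + Finsupp.single i 1) p := by
  classical
  induction p using MvPolynomial.induction_on' with
  | monomial s a =>
    rw [pderiv_monomial, coeff_monomial, coeff_monomial]
    rcases Nat.eq_zero_or_pos (s i) with h0 | hpos
    · have hne : s ≠ u + Finsupp.single i 1 := by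
        intro h
        have := congrFun (congrArg (fun f : σ →₀ ℕ => (f : σ → ℕ)) h) i
        simp [h0] at this
      rw [if_neg hne, h0]
      simp
    · have key : s - Finsupp.single i 1 = u ↔ s = u + Finsupp.single i 1 := by
        constructor
        · intro h; rw [← h]; ext j
          rcases eq_or_ne j i with rfl | hj
          · simp [Finsupp.single_apply]; omega
          · simp [Finsupp.single_apply, Ne.symm hj]
        · intro h; rw [h]; ext j
          rcases eq_or_ne j i with rfl | hj
          · simp [Finsupp.single_apply]
          · simp [Finsupp.single_apply, hj]
      by_cases h : s = u + Finsupp.single i 1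
      · rw [if_pos (key.mpr h), if_pos h]
        have : s i = u i + 1 := by rw [h]; simp
        rw [this]; push_cast; ring
      · rw [if_neg (fun hh => h (key.mp hh)), if_neg h, mul_zero]
  | add p q hp hq => simp [hp, hq]; ring

/-- The chain rule for `aeval` of multivariate polynomials. -/
lemma SW.pderiv_aeval [Fintype ι] (f : ι → MvPolynomial σ ℚ) (P : MvPolynomial ι ℚ) (j : σ) :
    pderiv j (aeval f P) = ∑ i, aeval f (pderiv i P) * pderiv j (f i) := by
  classical
  induction P using MvPolynomial.induction_on with
  | C a => simp
  | add p q hp hq =>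
    simp only [map_add, hp, hq, ← Finset.sum_add_distrib, ← add_mul]
  | mul_X p k hp =>
    have step : ∀ i : ι, aeval f (pderiv i (p * X k)) * pderiv j (f i) =
        (aeval f (pderiv i p) * pderiv j (f i)) * f k
          + (aeval f p * aeval f (pderiv i (X k : MvPolynomial ι ℚ))) * pderiv j (f i) := by
      intro i
      rw [pderiv_mul, map_add, map_mul, map_mul, aeval_X]
      ring
    rw [Finset.sum_congr rfl (fun i _ => step i), Finset.sum_add_distrib,
      ← Finset.sum_mul, ← hp,
      Fintype.sum_eq_single k (fun i hik => by
        rw [pderiv_X_of_ne (Ne.symm hik)]; simp),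
      pderiv_X_self, map_one, mul_one, map_mul, aeval_X, pderiv_mul]

lemma SW.totalDegree_pderiv_le (i : σ) (p : MvPolynomial σ ℚ) {n : ℕ}
    (h : p.totalDegree ≤ n + 1) : (pderiv i p).totalDegree ≤ n := by
  apply Finset.sup_le
  intro u hu
  rw [mem_support_iff, SW.coeff_pderiv, mul_ne_zero_iff] at hu
  have hmem : u + Finsupp.single i 1 ∈ p.support := mem_support_iff.mpr hu.2
  have hle := (le_totalDegree hmem).trans h
  rw [Finsupp.sum_add_index' (fun _ => rfl) (fun _ _ _ => rfl), Finsupp.sum_single_index rfl] at hle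
  omega

lemma SW.eq_C_of_pderiv_eq_zero (p : MvPolynomial σ ℚ) (h : ∀ i, pderiv i p = 0) :
    p = C (coeff 0 p) := by
  classical
  ext d
  rcases eq_or_ne d 0 with rfl | hd
  · simp
  · rw [coeff_C, if_neg (Ne.symm hd)]
    obtain ⟨i, hi⟩ : ∃ i, d i ≠ 0 := by
      by_contra hc
      push_neg at hc
      exact hd (Finsupp.ext fun j => hc j)
    have hrepr : (d - Finsupp.single i 1) + Finsupp.single i 1 = d := by
      ext j
      rcases eq_or_ne j i with rfl | hj
      · simp [Finsupp.single_apply]; omega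
      · simp [Finsupp.single_apply, Ne.symm hj]
    have hkey := SW.coeff_pderiv i p (d - Finsupp.single i 1)
    rw [h i, coeff_zero, hrepr] at hkey
    rcases mul_eq_zero.mp hkey.symm with hc | hc
    · exact absurd hc (Nat.cast_add_one_ne_zero _)
    · exact hc

lemma SW.multiset_prod_X_isHomogeneous (m : Multiset σ) :
    ((m.map (X : σ → MvPolynomial σ ℚ)).prod).IsHomogeneous (Multiset.card m) := by
  induction m using Multiset.induction_on with
  | empty => simpa using isHomogeneous_one σ ℚ
  | cons a m ih =>
    rw [Multiset.map_cons, Multiset.prod_cons, Multiset.card_cons, add_comm]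
    exact (isHomogeneous_X ℚ a).mul ih

lemma SW.hsymm_isHomogeneous (g : ℕ) (n : ℕ) :
    (hsymm (Fin g) ℚ n).IsHomogeneous n := by
  rw [hsymm]
  apply IsHomogeneous.sum
  intro s _
  have := SW.multiset_prod_X_isHomogeneous (σ := Fin g) s.1
  rwa [s.2] at this

lemma SW.psum_isHomogeneous (g : ℕ) (n : ℕ) :
    (psum (Fin g) ℚ n).IsHomogeneous n := by
  rw [psum]
  apply IsHomogeneous.sum
  intro i _
  exact isHomogeneous_X_pow i n

lemma SWu_isHomogeneous (g : ℕ) (i : Fin g) :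
    (SWu g i).IsHomogeneous (SWwt g i) :=
  (SW.psum_isHomogeneous g (SWwt g i)).C_mul _

lemma SWU_isHomogeneous (g : ℕ) (k : ℤ) (hk : 0 ≤ k) :
    (SWU g k).IsHomogeneous k.toNat := by
  rw [SWU, if_pos hk]
  exact (SW.hsymm_isHomogeneous g k.toNat).C_mul _

lemma SWD_isHomogeneous (g : ℕ) :
    (SWD g).IsHomogeneous (g * (g + 1) / 2) := by
  rw [SWD, Matrix.det_apply]
  apply IsHomogeneous.sum
  intro σ _
  have hprod : (∏ i, (Matrix.of fun i j : Fin g =>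
      SWU g ((g : ℤ) + (j : ℤ) - 2 * (i : ℤ))) (σ i) i).IsHomogeneous (g * (g + 1) / 2) := by
    by_cases hall : ∀ i : Fin g, 0 ≤ (g : ℤ) + (i : ℤ) - 2 * ((σ i : Fin g) : ℤ)
    · have hsum : ∑ i : Fin g, ((g : ℤ) + (i : ℤ) - 2 * ((σ i : Fin g) : ℤ)).toNat
          = g * (g + 1) / 2 := by
        have hcast : ((∑ i : Fin g, ((g : ℤ) + (i : ℤ) - 2 * ((σ i : Fin g) : ℤ)).toNat : ℕ) : ℤ)
            = ∑ i : Fin g, ((g : ℤ) + (i : ℤ) - 2 * ((σ i : Fin g) : ℤ)) := by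
          push_cast
          exact Finset.sum_congr rfl fun i _ => Int.toNat_of_nonneg (hall i)
        have hperm : ∑ i : Fin g, ((σ i : Fin g) : ℤ) = ∑ i : Fin g, (i : ℤ) :=
          Equiv.sum_comp σ (fun i : Fin g => (i : ℤ))
        have hsplit : ∑ i : Fin g, ((g : ℤ) + (i : ℤ) - 2 * ((σ i : Fin g) : ℤ))
            = g * g - ∑ i : Fin g, (i : ℤ) := by
          rw [Finset.sum_sub_distrib, Finset.sum_add_distrib, ← Finset.mul_sum, hperm]
          simp [Finset.sum_const, mul_comm]
          ring
        have hgauss : (∑ i : Fin g, (i : ℕ)) * 2 = g * (g - 1) := by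
          rw [Fin.sum_univ_eq_sum_range (fun i => i)]
          exact Finset.sum_range_id_mul_two g
        have hTS : ∑ i : Fin g, (i : ℤ) = ((∑ i : Fin g, (i : ℕ) : ℕ) : ℤ) := by push_cast; rfl
        rcases Nat.eq_zero_or_pos g with rfl | hgpos
        · simp
        rw [hsplit, hTS] at hcast
        set L : ℕ := ∑ i : Fin g, ((g : ℤ) + (i : ℤ) - 2 * ((σ i : Fin g) : ℤ)).toNat with hL
        set Sn : ℕ := ∑ i : Fin g, (i : ℕ) with hSn
        have hgaussZ : (Sn : ℤ) * 2 = (g : ℤ) * ((g : ℤ) - 1) := by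
          have h := hgauss
          zify [hgpos] at h
          linarith
        have h2L : (L : ℤ) * 2 = (g : ℤ) * ((g : ℤ) + 1) := by
          linear_combination 2 * hcast - hgaussZ
        have h2L' : L * 2 = g * (g + 1) := by exact_mod_cast h2L
        exact (Nat.div_eq_of_eq_mul_left two_pos h2L'.symm).symm
      rw [← hsum]
      apply IsHomogeneous.prod
      intro i _
      exact SWU_isHomogeneous g _ (hall i)
    · push_neg at hall
      obtain ⟨i, hi⟩ := hall
      have : (Matrix.of fun i j : Fin g =>
          SWU g ((g : ℤ) + (j : ℤ) - 2 * (i : ℤ))) (σ i) i = 0 := by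
        rw [Matrix.of_apply, SWU, if_neg (by exact not_le.mpr hi)]
      have hzero : (∏ k : Fin g, (Matrix.of fun i j : Fin g =>
          SWU g ((g : ℤ) + (j : ℤ) - 2 * (i : ℤ))) (σ k) k) = 0 :=
        Finset.prod_eq_zero (Finset.mem_univ i) this
      rw [hzero]
      exact isHomogeneous_zero _ _ _
  rcases Int.units_eq_one_or (Equiv.Perm.sign σ) with h | h
  · rw [h]; simpa using hprod
  · rw [h]; simpa using hprod.neg

lemma pderiv_SWu (g : ℕ) (i j : Fin g) :
    pderiv j (SWu g i) = X j ^ (2 * (g - 1 - (i : ℕ))) := by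
  have hw : ((SWwt g i : ℕ) : ℚ) ≠ 0 := by
    simp only [SWwt]; push_cast; positivity
  rw [SWu, pderiv_C_mul, psum, map_sum]
  rw [Finset.sum_congr rfl (fun k _ => pderiv_pow)]
  rw [Fintype.sum_eq_single j (fun k hk => by rw [pderiv_X_of_ne hk, mul_zero])]
  rw [pderiv_X_self, mul_one]
  have : (SWwt g i : MvPolynomial (Fin g) ℚ) = C ((SWwt g i : ℕ) : ℚ) := by
    simp
  rw [this, ← mul_assoc, ← C_mul, one_div, inv_mul_cancel₀ hw, C_1, one_mul]
  have hexp : SWwt g i - 1 = 2 * (g - 1 - (i : ℕ)) := by simp [SWwt]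
  rw [hexp]

/-- The Jacobian matrix of the substitution `SWu`. -/
noncomputable def SWA (g : ℕ) : Matrix (Fin g) (Fin g) (MvPolynomial (Fin g) ℚ) :=
  Matrix.of fun i j : Fin g => X j ^ (2 * (g - 1 - (i : ℕ)))

lemma SWA_det_ne_zero (g : ℕ) : (SWA g).det ≠ 0 := by
  have hA : SWA g = (Matrix.transpose (Matrix.vandermonde fun j : Fin g =>
      (X j : MvPolynomial (Fin g) ℚ) ^ 2)).submatrix Fin.revPerm id := by
    ext i j
    simp only [SWA, Matrix.of_apply, Matrix.submatrix_apply, Matrix.transpose_apply,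
      Matrix.vandermonde, Matrix.of_apply, id]
    rw [← pow_mul]
    congr 1
    have : ((Fin.revPerm i : Fin g) : ℕ) = g - 1 - (i : ℕ) := by
      simp [Fin.val_rev]
      omega
    rw [this]
  rw [hA, Matrix.det_permute, Matrix.det_transpose, Matrix.det_vandermonde]
  have hfac : ∀ i j : Fin g, i ≠ j →
      ((X j : MvPolynomial (Fin g) ℚ) ^ 2 - (X i) ^ 2) ≠ 0 := by
    intro i j hij h
    have := congrArg (eval (fun k => if k = j then (1 : ℚ) else 0)) h
    simp only [map_sub, eval_pow, eval_X, map_zero, if_pos rfl, if_neg hij] at this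
    norm_num at this
  apply mul_ne_zero
  · simp [Int.isUnit_iff]
  · rw [Finset.prod_ne_zero_iff]
    intro i _
    rw [Finset.prod_ne_zero_iff]
    intro j hj
    exact hfac i j (Finset.mem_Ioi.mp hj).ne

lemma SW.vec_eq_zero_of_vecMul_eq_zero {g : ℕ} {v : Fin g → MvPolynomial (Fin g) ℚ}
    (h : ∀ j, ∑ i, v i * SWA g i j = 0) : ∀ i, v i = 0 := by
  have hvm : Matrix.vecMul v (SWA g) = 0 := by
    funext j
    simp only [Matrix.vecMul, dotProduct]
    exact h j
  have hmv : Matrix.mulVec (Matrix.transpose (SWA g)) v = 0 := by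
    rw [Matrix.mulVec_transpose, hvm]
  have key : Matrix.det (Matrix.transpose (SWA g)) • v = 0 := by
    calc Matrix.det (Matrix.transpose (SWA g)) • v
        = ((Matrix.transpose (SWA g)).det • (1 : Matrix (Fin g) (Fin g) _)).mulVec v := by
          rw [Matrix.smul_mulVec, Matrix.one_mulVec]
      _ = ((Matrix.adjugate (Matrix.transpose (SWA g))) * (Matrix.transpose (SWA g))).mulVec v := by
          rw [Matrix.adjugate_mul]
      _ = (Matrix.adjugate (Matrix.transpose (SWA g))).mulVec
            ((Matrix.transpose (SWA g)).mulVec v) := by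
          rw [Matrix.mulVec_mulVec]
      _ = 0 := by rw [hmv, Matrix.mulVec_zero]
  intro i
  have := congrFun key i
  simp only [Pi.smul_apply, smul_eq_mul, Pi.zero_apply] at this
  rcases mul_eq_zero.mp this with hc | hc
  · exact absurd hc (by rw [Matrix.det_transpose]; exact SWA_det_ne_zero g)
  · exact hc

/-- The substitution `SWu` is injective on polynomials (algebraic independence of the
odd power sums). -/
lemma aeval_SWu_eq_zero {g : ℕ} : ∀ (n : ℕ) (P : MvPolynomial (Fin g) ℚ),
    P.totalDegree ≤ n → aeval (SWu g) P = 0 → P = 0 := by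
  intro n
  induction n with
  | zero =>
    intro P hdeg hz
    have hC : P = C (coeff 0 P) := by
      ext e
      rcases eq_or_ne e 0 with rfl | he
      · simp
      · rw [coeff_C, if_neg (Ne.symm he)]
        by_contra hne
        have hle := le_totalDegree (p := P) (mem_support_iff.mpr hne)
        have hsum : (e.sum fun _ k => k) = 0 :=
          le_antisymm (hle.trans hdeg) (Nat.zero_le _)
        apply he
        ext j
        by_cases hj : j ∈ e.support
        · exact Finset.sum_eq_zero_iff.mp hsum j hj
        · simpa using Finsupp.notMem_support_iff.mp hj
    rw [hC, aeval_C] at hz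
    have hc0 : coeff 0 P = 0 := by
      have := congrArg (coeff 0) hz
      simpa [algebraMap_eq] using this
    rw [hC, hc0, C_0]
  | succ n ih =>
    intro P hdeg hz
    have hder : ∀ i, aeval (SWu g) (pderiv i P) = 0 := by
      apply SW.vec_eq_zero_of_vecMul_eq_zero
      intro j
      have := SW.pderiv_aeval (SWu g) P j
      rw [hz, map_zero] at this
      rw [Finset.sum_congr rfl (fun i (_ : i ∈ Finset.univ) => by
        rw [SWA, Matrix.of_apply, ← pderiv_SWu g i j])]
      exact this.symm
    have : ∀ i, pderiv i P = 0 := fun i =>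
      ih (pderiv i P) (SW.totalDegree_pderiv_le i P hdeg) (hder i)
    have hC := SW.eq_C_of_pderiv_eq_zero P this
    rw [hC, aeval_C] at hz
    have hc0 : coeff 0 P = 0 := by
      have := congrArg (coeff 0) hz
      simpa [algebraMap_eq] using this
    rw [hC, hc0, C_0]

lemma SW.aeval_monomial_isHomogeneous (w : ι → ℕ) (f : ι → MvPolynomial σ ℚ)
    (hf : ∀ i, (f i).IsHomogeneous (w i)) (d : ι →₀ ℕ) (c : ℚ) :
    (aeval f (monomial d c)).IsHomogeneous (Finsupp.weight w d) := by
  rw [aeval_monomial]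
  have hprod : (d.prod fun i k => f i ^ k).IsHomogeneous (Finsupp.weight w d) := by
    rw [Finsupp.prod, Finsupp.weight_apply, Finsupp.sum]
    apply IsHomogeneous.prod
    intro i _
    have := (hf i).pow (d i)
    rwa [mul_comm, ← smul_eq_mul] at this
  have : (algebraMap ℚ (MvPolynomial σ ℚ)) c = C c := rfl
  rw [this]
  exact hprod.C_mul c

lemma SW.homogeneousComponent_aeval (w : ι → ℕ) (f : ι → MvPolynomial σ ℚ)
    (hf : ∀ i, (f i).IsHomogeneous (w i)) (P : MvPolynomial ι ℚ) (n : ℕ) :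
    homogeneousComponent n (aeval f P) = aeval f (weightedHomogeneousComponent w n P) := by
  classical
  conv_lhs => rw [← support_sum_monomial_coeff P]
  rw [map_sum, map_sum]
  rw [Finset.sum_congr rfl (fun d (_ : d ∈ P.support) =>
    homogeneousComponent_of_mem (mem_homogeneousSubmodule _ _ |>.mpr
      (SW.aeval_monomial_isHomogeneous w f hf d (coeff d P))))]
  rw [weightedHomogeneousComponent_apply, map_sum, Finset.sum_filter]
  apply Finset.sum_congr rfl
  intro d _
  by_cases h : Finsupp.weight w d = n
  · rw [if_pos h, if_pos h.symm]
  · rw [if_neg (fun hh => h (Eq.symm hh)), if_neg h]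

end AuxLemmas

/-- The Schur–Weierstrass polynomial `S` is weighted homogeneous of total weight
`g(g+1)/2` when `T_j` is assigned the weight `2(g-j)+1`: every monomial
`T_1^{m_1} ⋯ T_g^{m_g}` occurring in `S` satisfies `∑_j m_j (2(g-j)+1) = g(g+1)/2`. -/
theorem schur_weierstrass_weighted_homogeneous (g : ℕ) (hg : 0 < g)
    (S : MvPolynomial (Fin g) ℚ) (hS : aeval (SWu g) S = SWD g)
    (d : Fin g →₀ ℕ) (hd : d ∈ S.support) :
    ∑ j : Fin g, d j * SWwt g j = g * (g + 1) / 2 := by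
  classical
  set w0 : ℕ := Finsupp.weight (SWwt g) d with hw0def
  have hw0 : w0 = ∑ j : Fin g, d j * SWwt g j := by
    rw [hw0def, Finsupp.weight_apply, Finsupp.sum]
    apply Finset.sum_subset (Finset.subset_univ _)
    intro j _ hj
    rw [Finsupp.notMem_support_iff.mp hj]
    simp
  rw [← hw0]
  by_contra hne
  set Q : MvPolynomial (Fin g) ℚ := weightedHomogeneousComponent (SWwt g) w0 S with hQdef
  have hQd : coeff d Q = coeff d S := by
    rw [hQdef, coeff_weightedHomogeneousComponent, if_pos rfl]
  have hQne : Q ≠ 0 := by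
    intro h
    apply mem_support_iff.mp hd
    rw [← hQd, h, coeff_zero]
  have haQ : aeval (SWu g) Q = homogeneousComponent w0 (SWD g) := by
    rw [hQdef, ← SW.homogeneousComponent_aeval (SWwt g) (SWu g) (SWu_isHomogeneous g) S w0, hS]
  have hzero : homogeneousComponent w0 (SWD g) = 0 := by
    rw [homogeneousComponent_of_mem ((mem_homogeneousSubmodule _ _).mpr
      (SWD_isHomogeneous g)), if_neg hne]
  exact hQne (aeval_SWu_eq_zero Q.totalDegree Q le_rfl (haQ.trans hzero))
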